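/- Let H be an infinite-dimensional separable complex Hilbert space, A a bounded self-adjoint operator on H, and G a countable set of vectors in H with A^n g ≠ 0 for all g ∈ G and all n ∈ ℕ. Then the normalized family (A^n g / ‖A^n g‖), indexed by pairs (g,n) ∈ G × ℕ, is not a frame for H. -/

import Mathlib

open ContinuousLinearMap Filter
open scoped InnerProductSpace ENNReal

lemma pow_selfadj_inner {H : Type*} [NormedAddCommGroup H] [InnerProductSpace ℂ H]
    [CompleteSpace H] (A : H →L[ℂ] H) (hA : adjoint A = A) (k : ℕ) (x y : H) :
    ⟪(A ^ k) x, y⟫_ℂ = ⟪x, (A ^ k) y⟫_ℂ := by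
  induction k generalizing x y with
  | zero => simp
  | succ n ih =>
      have h1 : (A ^ (n+1)) x = (A ^ n) (A x) := by rw [pow_succ]; rfl
      have h2 : (A ^ (n+1)) y = A ((A ^ n) y) := by rw [pow_succ']; rfl
      have h3 := ContinuousLinearMap.adjoint_inner_left A ((A ^ n) y) x
      rw [hA] at h3
      rw [h1, h2, ih (A x) y]
      exact h3

theorem stmt_11 {H : Type*} [NormedAddCommGroup H] [InnerProductSpace ℂ H] [CompleteSpace H]
    [TopologicalSpace.SeparableSpace H] (hdim : ¬ FiniteDimensional ℂ H)
    (A : H →L[ℂ] H) (hA : adjoint A = A)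
    (G : Set H) (hG : G.Countable)
    (hnz : ∀ g ∈ G, ∀ n : ℕ, (A ^ n) g ≠ 0) :
    ¬ ∃ α β : ℝ, 0 < α ∧ α ≤ β ∧ ∀ f : H,
      ENNReal.ofReal (α * ‖f‖ ^ 2) ≤
        (∑' p : ↥G × ℕ, (‖⟪f, (‖(A ^ p.2) (p.1 : H)‖⁻¹ : ℝ) • (A ^ p.2) (p.1 : H)⟫_ℂ‖₊ : ℝ≥0∞) ^ 2) ∧
      (∑' p : ↥G × ℕ, (‖⟪f, (‖(A ^ p.2) (p.1 : H)‖⁻¹ : ℝ) • (A ^ p.2) (p.1 : H)⟫_ℂ‖₊ : ℝ≥0∞) ^ 2) ≤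
        ENNReal.ofReal (β * ‖f‖ ^ 2) := by
  rintro ⟨α, β, hα, hαβ, hframe⟩
  rcases G.eq_empty_or_nonempty with hGe | ⟨g, hg⟩
  · -- G empty: lower frame bound fails at a nonzero vector
    have hnt : Nontrivial H := by
      by_contra hns
      rw [not_nontrivial_iff_subsingleton] at hns
      exact hdim (Module.Finite.of_basis (Module.Basis.empty H (ι := Fin 0)))
    obtain ⟨f, hf⟩ := exists_ne (0 : H)
    have hE : IsEmpty (↥G) := by subst hGe; simp
    have h0 := (hframe f).1
    have hz : (∑' p : ↥G × ℕ,
        (‖⟪f, (‖(A ^ p.2) (p.1 : H)‖⁻¹ : ℝ) • (A ^ p.2) (p.1 : H)⟫_ℂ‖₊ : ℝ≥0∞) ^ 2) = 0 := by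
      rw [ENNReal.tsum_eq_zero]
      exact fun p => (hE.elim p.1)
    rw [hz, le_zero_iff, ENNReal.ofReal_eq_zero] at h0
    have h1 : 0 < α * ‖f‖ ^ 2 := mul_pos hα (pow_pos (norm_pos_iff.mpr hf) 2)
    linarith
  · -- main case
    classical
    set u : ℕ → ℝ := fun n => ‖(A ^ n) g‖ with hu
    have hupos : ∀ n, 0 < u n := fun n => norm_pos_iff.mpr (hnz g hg n)
    set r : ℕ → ℝ := fun n => u (n+1) / u n with hrdef
    have hrpos : ∀ n, 0 < r n := fun n => div_pos (hupos _) (hupos _)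
    have humul : ∀ n, u (n+1) = r n * u n :=
      fun n => (div_mul_cancel₀ _ (ne_of_gt (hupos n))).symm
    -- inner products of iterates
    have hinner : ∀ n k : ℕ, ⟪(A ^ n) g, (A ^ (n + 2*k)) g⟫_ℂ = ((u (n+k) ^ 2 : ℝ) : ℂ) := by
      intro n k
      have h1 : (A ^ (n + 2*k)) g = (A ^ k) ((A ^ (n+k)) g) := by
        rw [← ContinuousLinearMap.mul_apply, ← pow_add]
        congr 2; ring
      have h2 : (A ^ k) ((A ^ n) g) = (A ^ (n+k)) g := by
        rw [← ContinuousLinearMap.mul_apply, ← pow_add]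
        congr 2; ring
      rw [h1, ← pow_selfadj_inner A hA k, h2, inner_self_eq_norm_sq_to_K]
      norm_cast
    -- log-convexity: r is monotone
    have hmono : Monotone r := by
      apply monotone_nat_of_le_succ
      intro n
      have key : u (n+1) ^ 2 ≤ u n * u (n+2) := by
        have h := hinner n 1
        have hle := norm_inner_le_norm (𝕜 := ℂ) ((A ^ n) g) ((A ^ (n + 2*1)) g)
        rw [h] at hle
        have hn : ‖((u (n+1) ^ 2 : ℝ) : ℂ)‖ = u (n+1) ^ 2 := by
          rw [Complex.norm_real, Real.norm_eq_abs, abs_of_nonneg (by positivity)]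
        rw [hn] at hle
        exact hle
      show u (n+1) / u n ≤ u (n+2) / u (n+1)
      rw [div_le_div_iff₀ (hupos n) (hupos (n+1))]
      nlinarith [hupos n, hupos (n+1), hupos (n+2)]
    -- r is bounded above by ‖A‖
    have hbdd : BddAbove (Set.range r) := by
      refine ⟨‖A‖, ?_⟩
      rintro x ⟨n, rfl⟩
      have hle : u (n+1) ≤ ‖A‖ * u n := by
        have he : (A ^ (n+1)) g = A ((A ^ n) g) := by rw [pow_succ']; rfl
        calc u (n+1) = ‖A ((A ^ n) g)‖ := by rw [hu]; simp only [he]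
          _ ≤ ‖A‖ * u n := A.le_opNorm _
      show u (n+1) / u n ≤ ‖A‖
      exact (div_le_iff₀ (hupos n)).mpr hle
    set R : ℝ := ⨆ n, r n with hR
    have hrR : ∀ n, r n ≤ R := fun n => le_ciSup hbdd n
    have hRpos : 0 < R := lt_of_lt_of_le (hrpos 0) (hrR 0)
    have htend : Tendsto r atTop (nhds R) := tendsto_atTop_ciSup hmono hbdd
    -- growth bounds
    have hup : ∀ n k, u (n+k) ≤ u n * R ^ k := by
      intro n k
      induction k with
      | zero => simp
      | succ m ih =>
          have he : u (n + (m+1)) = r (n+m) * u (n+m) := humul (n+m)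
          rw [he, pow_succ]
          calc r (n+m) * u (n+m) ≤ R * (u n * R ^ m) :=
                mul_le_mul (hrR _) ih (hupos _).le hRpos.le
            _ = u n * (R ^ m * R) := by ring
    have hlow : ∀ n k, u n * r n ^ k ≤ u (n+k) := by
      intro n k
      induction k with
      | zero => simp
      | succ m ih =>
          have he : u (n + (m+1)) = r (n+m) * u (n+m) := humul (n+m)
          rw [he, pow_succ]
          calc u n * (r n ^ m * r n) = r n * (u n * r n ^ m) := by ring
            _ ≤ r (n+m) * u (n+m) :=
                mul_le_mul (hmono (Nat.le_add_right n m)) ih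
                  (mul_nonneg (hupos n).le (pow_nonneg (hrpos n).le m)) (hrpos _).le
    -- key estimate for normalized inner products
    have hkey : ∀ n k, (r n / R) ^ k ≤ u (n+k) ^ 2 / (u n * u (n + 2*k)) := by
      intro n k
      rw [div_pow, div_le_div_iff₀ (pow_pos hRpos k) (mul_pos (hupos n) (hupos _))]
      have h1 : u n * r n ^ k ≤ u (n+k) := hlow n k
      have h2 : u (n + 2*k) ≤ u (n+k) * R ^ k := by
        have h := hup (n+k) k
        have he : n + 2*k = n + k + k := by ring
        rw [he]; exact h
      calc r n ^ k * (u n * u (n + 2*k)) = (u n * r n ^ k) * u (n + 2*k) := by ring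
        _ ≤ u (n+k) * (u (n+k) * R ^ k) :=
            mul_le_mul h1 h2 (hupos _).le (hupos _).le
        _ = u (n+k) ^ 2 * R ^ k := by ring
    -- choose K and then N
    obtain ⟨K, hK⟩ : ∃ K : ℕ, 4*β < K := exists_nat_gt (4*β)
    have hβ0 : 0 ≤ β := le_trans hα.le hαβ
    have htendK : Tendsto (fun n => (r n / R) ^ K) atTop (nhds 1) := by
      have h := (htend.div_const R).pow K
      rw [div_self (ne_of_gt hRpos), one_pow] at h
      exact h
    have hev : ∀ᶠ n in atTop, (1/2 : ℝ) < (r n / R) ^ K :=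
      htendK.eventually (eventually_gt_nhds (by norm_num))
    obtain ⟨N, hN⟩ := hev.exists
    have hratio : r N / R ≤ 1 := (div_le_one hRpos).mpr (hrR N)
    have hratio0 : 0 ≤ r N / R := (div_pos (hrpos N) hRpos).le
    -- the test vector
    set f : H := ((u N)⁻¹ : ℝ) • (A ^ N) g with hf
    have hfnorm : ‖f‖ = 1 := by
      rw [hf, norm_smul, Real.norm_eq_abs, abs_of_nonneg (inv_nonneg.mpr (hupos N).le)]
      exact inv_mul_cancel₀ (ne_of_gt (hupos N))
    -- lower bound for each term of the chosen finite subfamily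
    have hterm : ∀ k : ℕ, k < K →
        ENNReal.ofReal (1/2) ^ 2 ≤
          (‖⟪f, (‖(A ^ (N + 2*(k+1))) g‖⁻¹ : ℝ) • (A ^ (N + 2*(k+1))) g⟫_ℂ‖₊ : ℝ≥0∞) ^ 2 := by
      intro k hk
      set m := N + 2*(k+1) with hm
      have hval : ⟪f, (‖(A ^ m) g‖⁻¹ : ℝ) • (A ^ m) g⟫_ℂ
          = ((((u N)⁻¹ * (u m)⁻¹ * u (N + (k+1)) ^ 2 : ℝ)) : ℂ) := by
        have hum : ‖(A ^ m) g‖ = u m := rfl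
        rw [hf, hum, ← Complex.coe_smul ((u N)⁻¹), ← Complex.coe_smul ((u m)⁻¹),
          inner_smul_left, inner_smul_right, hinner N (k+1), Complex.conj_ofReal]
        push_cast
        ring
      have hc : (1/2 : ℝ) ≤ (u N)⁻¹ * (u m)⁻¹ * u (N + (k+1)) ^ 2 := by
        have h1 : (r N / R) ^ (k+1) ≤ u (N + (k+1)) ^ 2 / (u N * u m) := by
          have := hkey N (k+1)
          rwa [hm]
        have h2 : (r N / R) ^ K ≤ (r N / R) ^ (k+1) :=
          pow_le_pow_of_le_one hratio0 hratio (by omega)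
        have h3 : u (N + (k+1)) ^ 2 / (u N * u m)
            = (u N)⁻¹ * (u m)⁻¹ * u (N + (k+1)) ^ 2 := by
          field_simp
        linarith [hN]
      have hnorm : (1/2 : ℝ) ≤ ‖⟪f, (‖(A ^ m) g‖⁻¹ : ℝ) • (A ^ m) g⟫_ℂ‖ := by
        rw [hval, Complex.norm_real, Real.norm_eq_abs]
        exact le_trans hc (le_abs_self _)
      calc ENNReal.ofReal (1/2) ^ 2
          ≤ ENNReal.ofReal ‖⟪f, (‖(A ^ m) g‖⁻¹ : ℝ) • (A ^ m) g⟫_ℂ‖ ^ 2 := by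
            gcongr
        _ = (‖⟪f, (‖(A ^ m) g‖⁻¹ : ℝ) • (A ^ m) g⟫_ℂ‖₊ : ℝ≥0∞) ^ 2 := by
            exact congrArg (· ^ 2) (ofReal_norm _)
    -- finite subfamily
    set T : ↥G × ℕ → ℝ≥0∞ := fun p =>
      (‖⟪f, (‖(A ^ p.2) (p.1 : H)‖⁻¹ : ℝ) • (A ^ p.2) (p.1 : H)⟫_ℂ‖₊ : ℝ≥0∞) ^ 2 with hT
    set s : Finset (↥G × ℕ) :=
      (Finset.range K).image (fun k => ((⟨g, hg⟩ : ↥G), N + 2*(k+1))) with hs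
    have hinj : Function.Injective (fun k : ℕ => ((⟨g, hg⟩ : ↥G), N + 2*(k+1))) := by
      intro a b hab
      simp only [Prod.mk.injEq] at hab
      omega
    have hsum : (K : ℝ≥0∞) * ENNReal.ofReal (1/2) ^ 2 ≤ ∑ p ∈ s, T p := by
      rw [hs, Finset.sum_image (fun a _ b _ h => hinj h)]
      calc (K : ℝ≥0∞) * ENNReal.ofReal (1/2) ^ 2
          = ∑ _k ∈ Finset.range K, ENNReal.ofReal (1/2) ^ 2 := by
            rw [Finset.sum_const, Finset.card_range, nsmul_eq_mul]
        _ ≤ ∑ k ∈ Finset.range K, T ((⟨g, hg⟩ : ↥G), N + 2*(k+1)) := by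
            apply Finset.sum_le_sum
            intro k hk
            exact hterm k (Finset.mem_range.mp hk)
    have hle1 : ∑ p ∈ s, T p ≤ ∑' p : ↥G × ℕ, T p := ENNReal.sum_le_tsum s
    have hle2 : (∑' p : ↥G × ℕ, T p) ≤ ENNReal.ofReal (β * ‖f‖ ^ 2) := (hframe f).2
    rw [hfnorm] at hle2
    have hfinal : (K : ℝ≥0∞) * ENNReal.ofReal (1/2) ^ 2 ≤ ENNReal.ofReal β := by
      calc (K : ℝ≥0∞) * ENNReal.ofReal (1/2) ^ 2 ≤ ∑ p ∈ s, T p := hsum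
        _ ≤ ∑' p : ↥G × ℕ, T p := hle1
        _ ≤ ENNReal.ofReal (β * 1 ^ 2) := hle2
        _ = ENNReal.ofReal β := by norm_num
    have hK4 : (K : ℝ≥0∞) * ENNReal.ofReal (1/2) ^ 2 = ENNReal.ofReal (K * (1/4)) := by
      rw [← ENNReal.ofReal_pow (by norm_num), ← ENNReal.ofReal_natCast K,
        ← ENNReal.ofReal_mul (by positivity)]
      norm_num
    rw [hK4] at hfinal
    rw [ENNReal.ofReal_le_ofReal_iff hβ0] at hfinal
    linarith
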